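/- Let I = (x_1x_3, x_1x_4, x_2x_3, x_2x_4, x_5^2) ⊆ k[x_1,…,x_5] and R = S/I. The cycle z = \overline{x_2x_5} e_1∧e_3∧e_4∧e_5 − \overline{x_1x_5} e_2∧e_3∧e_4∧e_5 in the Koszul complex K^R is not a boundary. -/

import Mathlib

open MvPolynomial

/-- The Koszul sign `sgn(τ, j) = (-1)^{#{s ∈ τ : s < j}}`. -/
def koszulSgn {n : ℕ} (τ : Finset (Fin n)) (j : Fin n) : ℤ :=
  (-1) ^ ((τ.filter fun s => s < j).card)

/-- The Koszul differential on chains, represented as functions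
`Finset (Fin n) → R` (the value at `σ` is the coefficient of `e_σ`):
`(∂w)(σ) = Σ_{j ∉ σ} sgn(σ ∪ {j}, j) · x_j · w(σ ∪ {j})`. -/
noncomputable def koszulBd {n : ℕ} {R : Type*} [CommRing R] (x : Fin n → R)
    (w : Finset (Fin n) → R) (σ : Finset (Fin n)) : R :=
  ∑ j ∈ σᶜ, koszulSgn (insert j σ) j • (x j * w (insert j σ))

/-- `I` is a monomial ideal: generated by a set of monomials. -/
def IsMonomialIdeal {k : Type*} [Field k] {n : ℕ}
    (I : Ideal (MvPolynomial (Fin n) k)) : Prop :=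
  ∃ G : Set (Fin n →₀ ℕ),
    I = Ideal.span ((fun d => (monomial d (1 : k) : MvPolynomial (Fin n) k)) '' G)

/-- Coefficient extraction: an element of the ideal has zero coefficient at a
multidegree `d` not divisible by any generator (case `d 2 = d 3 = 0`, `d 4 ≤ 1`). -/
lemma coeffI {k : Type*} [Field k] (f : MvPolynomial (Fin 5) k)
    (hf : f ∈ Ideal.span ({X 0 * X 2, X 0 * X 3, X 1 * X 2, X 1 * X 3, X 4 ^ 2} :
      Set (MvPolynomial (Fin 5) k)))
    (d : Fin 5 →₀ ℕ) (h2 : d 2 = 0) (h3 : d 3 = 0) (h4 : d 4 ≤ 1) :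
    coeff d f = 0 := by
  rw [Ideal.mem_span_insert] at hf
  obtain ⟨a1, z1, hz1, rfl⟩ := hf
  rw [Ideal.mem_span_insert] at hz1
  obtain ⟨a2, z2, hz2, rfl⟩ := hz1
  rw [Ideal.mem_span_insert] at hz2
  obtain ⟨a3, z3, hz3, rfl⟩ := hz2
  rw [Ideal.mem_span_insert] at hz3
  obtain ⟨a4, z4, hz4, rfl⟩ := hz3
  rw [Ideal.mem_span_singleton] at hz4
  obtain ⟨a5, h5⟩ := hz4
  rw [mul_comm] at h5
  subst h5
  have e2 : (2 : Fin 5) ∉ d.support := by simp [Finsupp.mem_support_iff, h2]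
  have e3 : (3 : Fin 5) ∉ d.support := by simp [Finsupp.mem_support_iff, h3]
  have e4 : (4 : Fin 5) ∉ (d - Finsupp.single 4 1).support := by
    rw [Finsupp.mem_support_iff]
    simp only [Finsupp.tsub_apply, Finsupp.single_eq_same, ne_eq, not_not]
    omega
  simp [coeff_add, sq, ← mul_assoc, coeff_mul_X', e2, e3, e4]

/-- Coefficient extraction, case `d 0 = d 1 = d 2 = 0`, `d 4 ≤ 1`. -/
lemma coeffI' {k : Type*} [Field k] (f : MvPolynomial (Fin 5) k)
    (hf : f ∈ Ideal.span ({X 0 * X 2, X 0 * X 3, X 1 * X 2, X 1 * X 3, X 4 ^ 2} :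
      Set (MvPolynomial (Fin 5) k)))
    (d : Fin 5 →₀ ℕ) (h0 : d 0 = 0) (h1 : d 1 = 0) (h2 : d 2 = 0) (h4 : d 4 ≤ 1) :
    coeff d f = 0 := by
  rw [Ideal.mem_span_insert] at hf
  obtain ⟨a1, z1, hz1, rfl⟩ := hf
  rw [Ideal.mem_span_insert] at hz1
  obtain ⟨a2, z2, hz2, rfl⟩ := hz1
  rw [Ideal.mem_span_insert] at hz2
  obtain ⟨a3, z3, hz3, rfl⟩ := hz2
  rw [Ideal.mem_span_insert] at hz3
  obtain ⟨a4, z4, hz4, rfl⟩ := hz3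
  rw [Ideal.mem_span_singleton] at hz4
  obtain ⟨a5, h5⟩ := hz4
  rw [mul_comm] at h5
  subst h5
  have e2 : (2 : Fin 5) ∉ d.support := by simp [Finsupp.mem_support_iff, h2]
  have e0 : (0 : Fin 5) ∉ (d - Finsupp.single 3 1).support := by
    rw [Finsupp.mem_support_iff]
    simp only [Finsupp.tsub_apply, Finsupp.single_apply, ne_eq, not_not]
    simpa using h0
  have e1 : (1 : Fin 5) ∉ (d - Finsupp.single 3 1).support := by
    rw [Finsupp.mem_support_iff]
    simp only [Finsupp.tsub_apply, Finsupp.single_apply, ne_eq, not_not]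
    simpa using h1
  have e4 : (4 : Fin 5) ∉ (d - Finsupp.single 4 1).support := by
    rw [Finsupp.mem_support_iff]
    simp only [Finsupp.tsub_apply, Finsupp.single_eq_same, ne_eq, not_not]
    omega
  simp [coeff_add, sq, ← mul_assoc, coeff_mul_X', e0, e1, e2, e4]

set_option maxHeartbeats 3000000 in
set_option synthInstance.maxHeartbeats 1000000 in
/-- for `I = (x₁x₃, x₁x₄, x₂x₃, x₂x₄, x₅²)` (0-indexed:
`(X₀X₂, X₀X₃, X₁X₂, X₁X₃, X₄²)`), the cycle
`z = \overline{x₂x₅} e₁∧e₃∧e₄∧e₅ − \overline{x₁x₅} e₂∧e₃∧e₄∧e₅`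
(coefficient `X₁X₄` at `{0,2,3,4}` and `−X₀X₄` at `{1,2,3,4}`) in the Koszul
complex of `S/I` is a cycle and is not a boundary. -/
theorem stmt18 (k : Type*) [Field k]
    (I : Ideal (MvPolynomial (Fin 5) k))
    (hI : I = Ideal.span {X 0 * X 2, X 0 * X 3, X 1 * X 2, X 1 * X 3, X 4 ^ 2}) :
    (koszulBd (fun i => Ideal.Quotient.mk I (X i))
        (fun τ => if τ = ({0, 2, 3, 4} : Finset (Fin 5))
          then Ideal.Quotient.mk I (X 1 * X 4)
          else if τ = ({1, 2, 3, 4} : Finset (Fin 5))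
            then - Ideal.Quotient.mk I (X 0 * X 4) else 0) = 0)
    ∧ ¬ ∃ w : Finset (Fin 5) → (MvPolynomial (Fin 5) k ⧸ I),
        koszulBd (fun i => Ideal.Quotient.mk I (X i)) w
          = fun τ => if τ = ({0, 2, 3, 4} : Finset (Fin 5))
              then Ideal.Quotient.mk I (X 1 * X 4)
              else if τ = ({1, 2, 3, 4} : Finset (Fin 5))
                then - Ideal.Quotient.mk I (X 0 * X 4) else 0 := by
  constructor
  · -- z is a cycle
    have mem : ∀ g : MvPolynomial (Fin 5) k, (∃ u v w x y : MvPolynomial (Fin 5) k,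
        g = u * (X 0 * X 2) + v * (X 0 * X 3) + w * (X 1 * X 2) + x * (X 1 * X 3) + y * X 4 ^ 2) →
        Ideal.Quotient.mk I g = 0 := by
      rintro g ⟨u, v, w, x, y, rfl⟩
      rw [Ideal.Quotient.eq_zero_iff_mem, hI]
      refine Ideal.add_mem _ (Ideal.add_mem _ (Ideal.add_mem _ (Ideal.add_mem _ ?_ ?_) ?_) ?_) ?_ <;>
        exact Ideal.mul_mem_left _ _ (Ideal.subset_span (by simp))
    have key : ∀ a b c : Fin 5, (∃ u v w x y : MvPolynomial (Fin 5) k,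
        X a * X b * X c = u * (X 0 * X 2) + v * (X 0 * X 3) + w * (X 1 * X 2) + x * (X 1 * X 3) + y * X 4 ^ 2) →
        Ideal.Quotient.mk I (X a) * (Ideal.Quotient.mk I (X b) * Ideal.Quotient.mk I (X c)) = 0 := by
      intro a b c h
      rw [← map_mul, ← map_mul, ← mul_assoc]
      exact mem _ h
    have hz1 := key 2 1 4 ⟨0,0,X 4,0,0, by ring⟩
    have hz2 := key 3 1 4 ⟨0,0,0,X 4,0, by ring⟩
    have hz3 := key 4 1 4 ⟨0,0,0,0,X 1, by ring⟩
    have hz4 := key 2 0 4 ⟨X 4,0,0,0,0, by ring⟩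
    have hz5 := key 3 0 4 ⟨0,X 4,0,0,0, by ring⟩
    have hz6 := key 4 0 4 ⟨0,0,0,0,X 0, by ring⟩
    have sgn0 : ∀ τ : Finset (Fin 5), koszulSgn (insert 0 τ) 0 = 1 := by
      intro τ
      have : (insert 0 τ).filter (fun s => s < 0) = ∅ := by
        rw [Finset.filter_eq_empty_iff]
        exact fun s _ => by simp
      rw [koszulSgn, this]; rfl
    have sgn1 : ∀ τ : Finset (Fin 5), (0 : Fin 5) ∉ τ → koszulSgn (insert 1 τ) 1 = 1 := by
      intro τ h
      have : (insert 1 τ).filter (fun s => s < 1) = ∅ := by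
        rw [Finset.filter_eq_empty_iff]
        intro s hs hlt
        have hall : ∀ t : Fin 5, t < 1 → t = 0 := by decide
        have hs0 : s = 0 := hall s hlt
        subst hs0
        rcases Finset.mem_insert.mp hs with h' | h'
        · exact absurd h' (by decide)
        · exact h h'
      rw [koszulSgn, this]; rfl
    have hz4n : Ideal.Quotient.mk I (X 2) * -(Ideal.Quotient.mk I (X 0) * Ideal.Quotient.mk I (X 4)) = 0 := by
      linear_combination -hz4
    have hz5n : Ideal.Quotient.mk I (X 3) * -(Ideal.Quotient.mk I (X 0) * Ideal.Quotient.mk I (X 4)) = 0 := by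
      linear_combination -hz5
    have hz6n : Ideal.Quotient.mk I (X 4) * -(Ideal.Quotient.mk I (X 0) * Ideal.Quotient.mk I (X 4)) = 0 := by
      linear_combination -hz6
    have hcross : Ideal.Quotient.mk I (X 0) * (Ideal.Quotient.mk I (X 1) * Ideal.Quotient.mk I (X 4)) +
        Ideal.Quotient.mk I (X 1) * -(Ideal.Quotient.mk I (X 0) * Ideal.Quotient.mk I (X 4)) = 0 := by
      ring
    funext σ
    rw [koszulBd, ← Finset.univ_inter σᶜ, ← Finset.sum_ite_mem, Fin.sum_univ_five]
    fin_cases σ <;>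
      simp (config := { decide := true }) [hz1, hz2, hz3, hz4, hz5, hz6,
        hz4n, hz5n, hz6n, sgn0, sgn1, hcross]
  · -- z is not a boundary
    rintro ⟨w, hw⟩
    obtain ⟨p, hp⟩ := Ideal.Quotient.mk_surjective (w Finset.univ)
    have hu1 : insert (0 : Fin 5) ({1,2,3,4} : Finset (Fin 5)) = Finset.univ := by decide
    have hu2 : insert (3 : Fin 5) ({0,1,2,4} : Finset (Fin 5)) = Finset.univ := by decide
    have h1 := congrFun hw ({1,2,3,4} : Finset (Fin 5))
    rw [koszulBd, show (({1,2,3,4} : Finset (Fin 5))ᶜ = {0}) from by decide,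
      Finset.sum_singleton, hu1, show koszulSgn Finset.univ (0 : Fin 5) = 1 from by decide] at h1
    rw [if_neg (by decide), if_pos rfl] at h1
    simp only [one_smul, ← hp, ← map_mul] at h1
    have h2 := congrFun hw ({0,1,2,4} : Finset (Fin 5))
    rw [koszulBd, show (({0,1,2,4} : Finset (Fin 5))ᶜ = {3}) from by decide,
      Finset.sum_singleton, hu2, show koszulSgn Finset.univ (3 : Fin 5) = -1 from by decide] at h2
    rw [if_neg (by decide), if_neg (by decide)] at h2
    simp only [neg_smul, one_smul, ← hp, ← map_mul] at h2
    have m1 : X 0 * p + X 0 * X 4 ∈ I := by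
      rw [← Ideal.Quotient.eq_zero_iff_mem, map_add, h1]
      ring
    have m2 : X 3 * p ∈ I := by
      rw [← Ideal.Quotient.eq_zero_iff_mem]
      exact neg_eq_zero.mp h2
    rw [hI] at m1 m2
    have c1 := coeffI _ m1 (Finsupp.single 0 1 + Finsupp.single 4 1)
      (by simp [Finsupp.single_apply]) (by simp [Finsupp.single_apply]) (by simp [Finsupp.single_apply])
    have c2 := coeffI' _ m2 (Finsupp.single 3 1 + Finsupp.single 4 1)
      (by simp [Finsupp.single_apply]) (by simp [Finsupp.single_apply])
      (by simp [Finsupp.single_apply]) (by simp [Finsupp.single_apply])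
    rw [coeff_X_mul] at c2
    rw [coeff_add, coeff_X_mul, coeff_X_mul, coeff_X] at c1
    rw [c2, zero_add] at c1
    exact one_ne_zero (by rwa [if_pos rfl] at c1)
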